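/- arXiv:1608.05862 — 5 statements merged into one kernel-verified Lean document; each statement's English description precedes it below -/
import Mathlib

section
/- Let A be an n×n column-stochastic matrix with positive entries and a a positive probability vector with b = Aa. Then the matrix F(A,a) = D(b) − A D(a) Aᵀ is positive semidefinite, has 0 as a simple eigenvalue (with eigenvector 𝟙), and all its other eigenvalues are strictly positive; equivalently, the restriction of F(A,a) to the hyperplane W = {w : 𝟙ᵀw = 0} is positive definite. -/
open Matrix

theorem stmt2 {n : ℕ} (A : Matrix (Fin n) (Fin n) ℝ)
    (hA : ∀ i j, 0 < A i j)
    (hstoch : Aᵀ *ᵥ (fun _ => (1 : ℝ)) = fun _ => (1 : ℝ))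
    (a : Fin n → ℝ) (ha : ∀ i, 0 < a i) (ha1 : ∑ i, a i = 1)
    (b : Fin n → ℝ) (hb : b = A *ᵥ a) :
    (Matrix.diagonal b - A * Matrix.diagonal a * Aᵀ).PosSemidef ∧
    (Matrix.diagonal b - A * Matrix.diagonal a * Aᵀ) *ᵥ (fun _ => (1 : ℝ)) = 0 ∧
    ∀ w : Fin n → ℝ, (∑ i, w i = 0) → w ≠ 0 →
      0 < w ⬝ᵥ ((Matrix.diagonal b - A * Matrix.diagonal a * Aᵀ) *ᵥ w) := by
  have hcol : ∀ j, ∑ i, A i j = 1 := by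
    intro j
    have := congrFun hstoch j
    simpa [mulVec, dotProduct, transpose_apply] using this
  have hb' : ∀ i, b i = ∑ j, A i j * a j := by
    intro i; rw [hb]; simp [mulVec, dotProduct]
  set F := Matrix.diagonal b - A * Matrix.diagonal a * Aᵀ with hF
  -- key quadratic form identity
  have key : ∀ w : Fin n → ℝ,
      w ⬝ᵥ (F *ᵥ w) = ∑ j, a j * ∑ i, A i j * (w i - ∑ k, A k j * w k)^2 := by
    intro w
    have h1 : ∀ j, ∑ i, A i j * (w i - ∑ k, A k j * w k)^2
        = (∑ i, A i j * w i ^ 2) - (∑ k, A k j * w k)^2 := by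
      intro j
      set m := ∑ k, A k j * w k with hm
      have e1 : ∑ i, A i j * (w i - m)^2
          = ∑ i, (A i j * w i ^ 2 - 2 * m * (A i j * w i) + m^2 * A i j) := by
        apply Finset.sum_congr rfl; intro i _; ring
      rw [e1, Finset.sum_add_distrib, Finset.sum_sub_distrib, ← Finset.mul_sum,
        ← Finset.mul_sum, hcol j, ← hm]
      ring
    have h2 : w ⬝ᵥ ((A * Matrix.diagonal a * Aᵀ) *ᵥ w)
        = ∑ j, a j * (∑ k, A k j * w k)^2 := by
      have e2 : (A * Matrix.diagonal a * Aᵀ) *ᵥ w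
          = A *ᵥ (Matrix.diagonal a *ᵥ (Aᵀ *ᵥ w)) := by
        rw [mulVec_mulVec, mulVec_mulVec]
      rw [e2, dotProduct_mulVec w A]
      simp only [mulVec_diagonal, vecMul, mulVec, dotProduct, transpose_apply,
        diagonal_apply, ite_mul, zero_mul, Finset.sum_ite_eq, Finset.mem_univ, if_pos]
      apply Finset.sum_congr rfl
      intro j _
      have : ∑ i, w i * A i j = ∑ k, A k j * w k := by
        apply Finset.sum_congr rfl; intro i _; ring
      rw [this]; ring
    have h3 : w ⬝ᵥ (Matrix.diagonal b *ᵥ w) = ∑ j, a j * ∑ i, A i j * w i ^ 2 := by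
      simp only [mulVec_diagonal, dotProduct]
      have e3 : ∀ i, w i * (b i * w i) = ∑ j, a j * (A i j * w i ^ 2) := by
        intro i
        rw [hb' i, Finset.sum_mul, Finset.mul_sum]
        apply Finset.sum_congr rfl; intro j _; ring
      rw [Finset.sum_congr rfl (fun i _ => e3 i), Finset.sum_comm]
      apply Finset.sum_congr rfl; intro j _
      rw [Finset.mul_sum]
    rw [hF, sub_mulVec, dotProduct_sub, h2, h3]
    rw [← Finset.sum_sub_distrib]
    apply Finset.sum_congr rfl; intro j _
    rw [h1 j]; ring
  have hnonneg : ∀ w : Fin n → ℝ, 0 ≤ w ⬝ᵥ (F *ᵥ w) := by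
    intro w
    rw [key w]
    apply Finset.sum_nonneg
    intro j _
    apply mul_nonneg (ha j).le
    apply Finset.sum_nonneg
    intro i _
    exact mul_nonneg (hA i j).le (sq_nonneg _)
  have hherm : F.IsHermitian := by
    unfold Matrix.IsHermitian
    rw [hF]
    simp only [conjTranspose_eq_transpose_of_trivial, transpose_sub, transpose_mul,
      transpose_transpose, diagonal_transpose]
    rw [Matrix.mul_assoc]
  refine ⟨⟨hherm, ?_⟩, ?_, ?_⟩
  · intro x
    have := hnonneg (fun i => x i)
    simpa [dotProduct, star, mulVec, Finsupp.sum_fintype, Finset.mul_sum, mul_assoc] using this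
  · have h1 : Aᵀ *ᵥ (fun _ => (1 : ℝ)) = fun _ => (1 : ℝ) := hstoch
    rw [hF, sub_mulVec]
    have e2 : (A * Matrix.diagonal a * Aᵀ) *ᵥ (fun _ => (1 : ℝ))
        = A *ᵥ (Matrix.diagonal a *ᵥ (Aᵀ *ᵥ (fun _ => (1 : ℝ)))) := by
      rw [mulVec_mulVec, mulVec_mulVec]
    rw [e2, h1]
    have e3 : Matrix.diagonal a *ᵥ (fun _ => (1 : ℝ)) = a := by
      funext i; simp [mulVec_diagonal]
    rw [e3, ← hb]
    funext i
    simp [mulVec_diagonal]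
  · intro w hsum hne
    rw [key w]
    obtain ⟨i₀, hi₀⟩ : ∃ i, w i ≠ 0 := by
      by_contra h
      push_neg at h
      exact hne (funext h)
    set m := fun j => ∑ k, A k j * w k with hm
    have hQpos : ∀ j, 0 < ∑ i, A i j * (w i - m j)^2 := by
      intro j
      obtain ⟨i₁, hi₁⟩ : ∃ i, w i ≠ m j := by
        by_contra h
        push_neg at h
        have : ∑ i, w i = ∑ i : Fin n, m j := Finset.sum_congr rfl (fun i _ => h i)
        rw [hsum, Finset.sum_const, Finset.card_univ, Fintype.card_fin] at this
        have hn : (n : ℝ) ≠ 0 := by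
          have : 0 < n := Fin.pos i₀
          exact_mod_cast this.ne'
        have hmj : m j = 0 := by
          have h' : (n : ℝ) * m j = 0 := by rw [← nsmul_eq_mul]; exact this.symm
          rcases mul_eq_zero.mp h' with h'' | h''
          · exact absurd h'' hn
          · exact h''
        exact hi₀ (by rw [h i₀, hmj])
      apply Finset.sum_pos'
      · intro i _
        exact mul_nonneg (hA i j).le (sq_nonneg _)
      · refine ⟨i₁, Finset.mem_univ _, ?_⟩
        apply mul_pos (hA i₁ j)
        exact pow_pos (abs_pos.mpr (sub_ne_zero.mpr hi₁)) 2 |>.trans_eq (by rw [sq_abs])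
    apply Finset.sum_pos
    · intro j _
      exact mul_pos (ha j) (hQpos j)
    · exact ⟨i₀, Finset.mem_univ _⟩
end

section
/- If A is a fully indecomposable nonnegative n×n matrix (meaning PAQ is irreducible for every pair of permutation matrices P, Q), then A Aᵀ is irreducible. -/
open Matrix

/-- A square matrix is irreducible if for every nontrivial proper subset `S` of indices
there is a nonzero entry from `S` to its complement. -/
def MatrixIrreducible {n : ℕ} (M : Matrix (Fin n) (Fin n) ℝ) : Prop :=
  ∀ S : Finset (Fin n), S.Nonempty → S ≠ Finset.univ → ∃ i ∈ S, ∃ j ∉ S, M i j ≠ 0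

/-- A nonnegative square matrix is fully indecomposable if every row/column permutation
of it (i.e. every `P * A * Q` with `P`, `Q` permutation matrices) is irreducible. -/
def FullyIndecomposable {n : ℕ} (A : Matrix (Fin n) (Fin n) ℝ) : Prop :=
  ∀ σ τ : Equiv.Perm (Fin n), MatrixIrreducible (A.submatrix σ τ)

lemma exists_perm_maps_into {n : ℕ} (U V : Finset (Fin n)) (h : U.card ≤ V.card) :
    ∃ τ : Equiv.Perm (Fin n), ∀ x ∈ U, τ x ∈ V := by
  classical
  obtain ⟨W, hWV, hW⟩ := Finset.exists_subset_card_eq h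
  have e : {x // x ∈ U} ≃ {x // x ∈ W} := Finset.equivOfCardEq hW.symm
  refine ⟨e.extendSubtype, fun x hx => ?_⟩
  exact hWV (e.extendSubtype_mem x hx)

theorem stmt6 {n : ℕ} (A : Matrix (Fin n) (Fin n) ℝ)
    (hA : ∀ i j, 0 ≤ A i j)
    (hfi : FullyIndecomposable A) :
    MatrixIrreducible (A * Aᵀ) := by
  classical
  intro S hS hSne
  by_contra hcon
  push_neg at hcon
  -- every entry product vanishes across the cut
  have hzero : ∀ i ∈ S, ∀ j ∉ S, ∀ k, A i k * A j k = 0 := by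
    intro i hi j hj k
    have h0 : (A * Aᵀ) i j = 0 := hcon i hi j hj
    have : ∑ k, A i k * A j k = 0 := by
      simpa [Matrix.mul_apply, Matrix.transpose_apply] using h0
    have := (Finset.sum_eq_zero_iff_of_nonneg
      (fun k _ => mul_nonneg (hA i k) (hA j k))).mp this
    exact this k (Finset.mem_univ k)
  -- every row of A has a nonzero entry
  obtain ⟨a, ha⟩ := hS
  obtain ⟨b, hb⟩ : ∃ b, b ∉ S := by
    by_contra hb; push_neg at hb
    exact hSne (Finset.eq_univ_iff_forall.mpr hb)
  have hab : a ≠ b := fun h => hb (h ▸ ha)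
  have hrow : ∀ i : Fin n, ∃ k, A i k ≠ 0 := by
    intro i
    have hne : ({i} : Finset (Fin n)) ≠ Finset.univ := by
      intro h
      have ha' : a ∈ ({i} : Finset (Fin n)) := h ▸ Finset.mem_univ a
      have hb' : b ∈ ({i} : Finset (Fin n)) := h ▸ Finset.mem_univ b
      exact hab ((Finset.mem_singleton.mp ha').trans (Finset.mem_singleton.mp hb').symm)
    obtain ⟨i', hi', j, hj, hAij⟩ := hfi 1 1 {i} (Finset.singleton_nonempty i) hne
    rw [Finset.mem_singleton] at hi'
    subst hi'
    exact ⟨j, by simpa using hAij⟩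
  -- the set of columns hit by rows of S
  set T : Finset (Fin n) := Finset.univ.filter (fun k => ∃ i ∈ S, A i k ≠ 0) with hT
  have hmemT : ∀ k, k ∈ T ↔ ∃ i ∈ S, A i k ≠ 0 := by
    intro k; simp [hT]
  -- key zero blocks
  have hblock1 : ∀ i ∈ S, ∀ k ∉ T, A i k = 0 := by
    intro i hi k hk
    by_contra h
    exact hk ((hmemT k).mpr ⟨i, hi, h⟩)
  have hblock2 : ∀ j, j ∉ S → ∀ k ∈ T, A j k = 0 := by
    intro j hj k hk
    obtain ⟨i, hi, hAik⟩ := (hmemT k).mp hk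
    have := hzero i hi j hj k
    rcases mul_eq_zero.mp this with h | h
    · exact absurd h hAik
    · exact h
  -- T is nonempty and proper
  have hTne : T.Nonempty := by
    obtain ⟨k, hk⟩ := hrow a
    exact ⟨k, (hmemT k).mpr ⟨a, ha, hk⟩⟩
  have hTerne : Tᶜ.Nonempty := by
    obtain ⟨k, hk⟩ := hrow b
    refine ⟨k, Finset.mem_compl.mpr ?_⟩
    intro hkT
    exact hk (hblock2 b hb k hkT)
  rcases le_total T.card S.card with hle | hle
  · -- τ maps Sᶜ into Tᶜ
    have hcard : Sᶜ.card ≤ Tᶜ.card := by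
      rw [Finset.card_compl, Finset.card_compl]
      omega
    obtain ⟨τ, hτ⟩ := exists_perm_maps_into Sᶜ Tᶜ hcard
    obtain ⟨i, hi, j, hj, hAij⟩ := hfi 1 τ S ⟨a, ha⟩ hSne
    have hτj : τ j ∈ Tᶜ := hτ j (Finset.mem_compl.mpr hj)
    have : A i (τ j) = 0 := hblock1 i hi (τ j) (Finset.mem_compl.mp hτj)
    exact hAij (by simpa [Matrix.submatrix_apply] using this)
  · -- τ maps S into T
    obtain ⟨τ, hτ⟩ := exists_perm_maps_into S T hle
    have hScne : Sᶜ.Nonempty := ⟨b, Finset.mem_compl.mpr hb⟩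
    have hScne' : Sᶜ ≠ Finset.univ := by
      intro h
      have := h ▸ Finset.mem_univ a
      exact (Finset.mem_compl.mp this) ha
    obtain ⟨i, hi, j, hj, hAij⟩ := hfi 1 τ Sᶜ hScne hScne'
    rw [Finset.mem_compl] at hi
    have hjS : j ∈ S := by simpa using hj
    have hτj : τ j ∈ T := hτ j hjS
    have : A i (τ j) = 0 := hblock2 i hi (τ j) hτj
    exact hAij (by simpa [Matrix.submatrix_apply] using this)
end

section
/- Let α ∈ H_{n,++} (positive definite Hermitian of trace 1) and X positive definite Hermitian with a ≤ λ_n(X), λ₁(X) ≤ b where 0 < a ≤ b. Define D_α(X) = (tr(X⁻¹α))⁻¹ · X^{-1/2} α X^{-1/2}. Then D_α(X) is positive definite of trace 1, and its eigenvalues satisfy λ_n(D_α(X)) ≥ a λ_n(α)/(a λ_n(α) + (n−1) b λ₁(α)) and λ₁(D_α(X)) ≤ b λ₁(α)/(b λ₁(α) + (n−1) a λ_n(α)). -/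
open Matrix
open scoped ComplexOrder

/-- The largest eigenvalue of a Hermitian matrix. -/
noncomputable def maxEig {n : ℕ} {M : Matrix (Fin n) (Fin n) ℂ} (hM : M.IsHermitian) : ℝ :=
  ⨆ i, hM.eigenvalues i

/-- The smallest eigenvalue of a Hermitian matrix. -/
noncomputable def minEig {n : ℕ} {M : Matrix (Fin n) (Fin n) ℂ} (hM : M.IsHermitian) : ℝ :=
  ⨅ i, hM.eigenvalues i

section helpers

variable {m : Type*} [Fintype m] [DecidableEq m]

set_option linter.unusedSectionVars false

lemma my_smul_psd {M : Matrix m m ℂ} (hM : M.PosSemidef) {c : ℝ} (hc : 0 ≤ c) :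
    ((c : ℂ) • M).PosSemidef := by
  refine posSemidef_iff_dotProduct_mulVec.mpr ⟨?_, ?_⟩
  · rw [IsHermitian, conjTranspose_smul, hM.1.eq, Complex.star_def, Complex.conj_ofReal]
  · intro x
    rw [smul_mulVec, dotProduct_smul]
    exact mul_nonneg (by exact_mod_cast hc) (hM.dotProduct_mulVec_nonneg x)

lemma my_smul_pd {M : Matrix m m ℂ} (hM : M.PosDef) {c : ℝ} (hc : 0 < c) :
    ((c : ℂ) • M).PosDef := by
  refine posDef_iff_dotProduct_mulVec.mpr ⟨?_, ?_⟩
  · rw [IsHermitian, conjTranspose_smul, hM.1.eq, Complex.star_def, Complex.conj_ofReal]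
  · intro x hx
    rw [smul_mulVec, dotProduct_smul]
    exact mul_pos (by exact_mod_cast hc) (hM.dotProduct_mulVec_pos hx)

lemma my_conj_pd {A B : Matrix m m ℂ} (hA : A.PosDef) (hB : IsUnit B.det) :
    (B * A * Bᴴ).PosDef := by
  refine posDef_iff_dotProduct_mulVec.mpr ⟨isHermitian_mul_mul_conjTranspose _ hA.1, fun x hx => ?_⟩
  have hx' : Bᴴ *ᵥ x ≠ 0 := by
    intro h
    apply hx
    have : B.conjTranspose⁻¹ *ᵥ (Bᴴ *ᵥ x) = x := by
      rw [mulVec_mulVec, nonsing_inv_mul _ (by simpa using hB), one_mulVec]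
    rw [h, mulVec_zero] at this
    exact this.symm
  have := hA.dotProduct_mulVec_pos hx'
  have e : star x ⬝ᵥ (B * A * Bᴴ) *ᵥ x = star (Bᴴ *ᵥ x) ⬝ᵥ A *ᵥ (Bᴴ *ᵥ x) := by
    simp only [star_mulVec, conjTranspose_conjTranspose, ← mulVec_mulVec, dotProduct_mulVec]
  rwa [e]

lemma my_decomp {M : Matrix m m ℂ} (hM : M.IsHermitian) (c : ℝ) :
    M - (c : ℂ) • 1 = (hM.eigenvectorUnitary : Matrix m m ℂ) *
      diagonal (fun i => ((hM.eigenvalues i - c : ℝ) : ℂ)) *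
      star (hM.eigenvectorUnitary : Matrix m m ℂ) := by
  have hU : (hM.eigenvectorUnitary : Matrix m m ℂ) * star (hM.eigenvectorUnitary : Matrix m m ℂ) = 1 :=
    (Matrix.mem_unitaryGroup_iff).mp hM.eigenvectorUnitary.2
  have hdiag : diagonal (fun i => ((hM.eigenvalues i - c : ℝ) : ℂ)) =
      diagonal (RCLike.ofReal ∘ hM.eigenvalues) - (c : ℂ) • 1 := by
    ext i j
    rcases eq_or_ne i j with rfl | h
    · simp
    · simp [diagonal_apply_ne _ h, one_apply_ne h]
  rw [hdiag, Matrix.mul_sub, Matrix.sub_mul, ← (hM.spectral_theorem.trans (Unitary.conjStarAlgAut_apply _ _))]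
  congr 1
  rw [Matrix.mul_smul, Matrix.smul_mul, Matrix.mul_one, hU]

lemma my_ge_iff {M : Matrix m m ℂ} (hM : M.IsHermitian) (c : ℝ) :
    (M - (c : ℂ) • 1).PosSemidef ↔ ∀ i, c ≤ hM.eigenvalues i := by
  have hU : (hM.eigenvectorUnitary : Matrix m m ℂ) * star (hM.eigenvectorUnitary : Matrix m m ℂ) = 1 :=
    (Matrix.mem_unitaryGroup_iff).mp hM.eigenvectorUnitary.2
  have hU' : star (hM.eigenvectorUnitary : Matrix m m ℂ) * (hM.eigenvectorUnitary : Matrix m m ℂ) = 1 :=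
    (Matrix.mem_unitaryGroup_iff').mp hM.eigenvectorUnitary.2
  constructor
  · intro h i
    have h2 := h.conjTranspose_mul_mul_same (hM.eigenvectorUnitary : Matrix m m ℂ)
    rw [my_decomp hM c, Matrix.star_eq_conjTranspose] at h2
    have e : (hM.eigenvectorUnitary : Matrix m m ℂ)ᴴ *
        ((hM.eigenvectorUnitary : Matrix m m ℂ) *
          diagonal (fun i => ((hM.eigenvalues i - c : ℝ) : ℂ)) *
          (hM.eigenvectorUnitary : Matrix m m ℂ)ᴴ) *
        (hM.eigenvectorUnitary : Matrix m m ℂ) =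
        diagonal (fun i => ((hM.eigenvalues i - c : ℝ) : ℂ)) := by
      rw [← Matrix.star_eq_conjTranspose]
      rw [Matrix.mul_assoc, Matrix.mul_assoc, hU', Matrix.mul_one, ← Matrix.mul_assoc, hU',
        Matrix.one_mul]
    rw [e] at h2
    have := posSemidef_diagonal_iff.mp h2 i
    have : (0:ℝ) ≤ hM.eigenvalues i - c := by exact_mod_cast this
    linarith
  · intro h
    rw [my_decomp hM c, Matrix.star_eq_conjTranspose]
    refine (posSemidef_diagonal_iff.mpr fun i => ?_).mul_mul_conjTranspose_same _
    have : (0:ℝ) ≤ hM.eigenvalues i - c := by linarith [h i]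
    exact_mod_cast this

lemma my_decomp' {M : Matrix m m ℂ} (hM : M.IsHermitian) (c : ℝ) :
    (c : ℂ) • 1 - M = (hM.eigenvectorUnitary : Matrix m m ℂ) *
      diagonal (fun i => ((c - hM.eigenvalues i : ℝ) : ℂ)) *
      star (hM.eigenvectorUnitary : Matrix m m ℂ) := by
  have h1 : (c : ℂ) • (1 : Matrix m m ℂ) - M = -(M - (c : ℂ) • 1) := (neg_sub _ _).symm
  rw [h1, my_decomp hM c]
  rw [← Matrix.neg_mul, ← Matrix.mul_neg]
  congr 2
  rw [show (fun i => ((c - hM.eigenvalues i : ℝ) : ℂ)) =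
      fun i => -((hM.eigenvalues i - c : ℝ) : ℂ) from by ext i; push_cast; ring, diagonal_neg]

lemma my_le_iff {M : Matrix m m ℂ} (hM : M.IsHermitian) (c : ℝ) :
    ((c : ℂ) • 1 - M).PosSemidef ↔ ∀ i, hM.eigenvalues i ≤ c := by
  have hU : (hM.eigenvectorUnitary : Matrix m m ℂ) * star (hM.eigenvectorUnitary : Matrix m m ℂ) = 1 :=
    (Matrix.mem_unitaryGroup_iff).mp hM.eigenvectorUnitary.2
  have hU' : star (hM.eigenvectorUnitary : Matrix m m ℂ) * (hM.eigenvectorUnitary : Matrix m m ℂ) = 1 :=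
    (Matrix.mem_unitaryGroup_iff').mp hM.eigenvectorUnitary.2
  constructor
  · intro h i
    have h2 := h.conjTranspose_mul_mul_same (hM.eigenvectorUnitary : Matrix m m ℂ)
    rw [my_decomp' hM c, Matrix.star_eq_conjTranspose] at h2
    have e : (hM.eigenvectorUnitary : Matrix m m ℂ)ᴴ *
        ((hM.eigenvectorUnitary : Matrix m m ℂ) *
          diagonal (fun i => ((c - hM.eigenvalues i : ℝ) : ℂ)) *
          (hM.eigenvectorUnitary : Matrix m m ℂ)ᴴ) *
        (hM.eigenvectorUnitary : Matrix m m ℂ) =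
        diagonal (fun i => ((c - hM.eigenvalues i : ℝ) : ℂ)) := by
      rw [← Matrix.star_eq_conjTranspose]
      rw [Matrix.mul_assoc, Matrix.mul_assoc, hU', Matrix.mul_one, ← Matrix.mul_assoc, hU',
        Matrix.one_mul]
    rw [e] at h2
    have := posSemidef_diagonal_iff.mp h2 i
    have : (0:ℝ) ≤ c - hM.eigenvalues i := by exact_mod_cast this
    linarith
  · intro h
    rw [my_decomp' hM c, Matrix.star_eq_conjTranspose]
    refine (posSemidef_diagonal_iff.mpr fun i => ?_).mul_mul_conjTranspose_same _
    have : (0:ℝ) ≤ c - hM.eigenvalues i := by linarith [h i]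
    exact_mod_cast this

lemma my_trace_eq {M : Matrix m m ℂ} (hM : M.IsHermitian) :
    M.trace = ∑ i, (hM.eigenvalues i : ℂ) := by
  have hU' : star (hM.eigenvectorUnitary : Matrix m m ℂ) * (hM.eigenvectorUnitary : Matrix m m ℂ) = 1 :=
    (Matrix.mem_unitaryGroup_iff').mp hM.eigenvectorUnitary.2
  conv_lhs => rw [hM.spectral_theorem, Unitary.conjStarAlgAut_apply]
  rw [Matrix.trace_mul_cycle, hU', Matrix.one_mul, trace_diagonal]
  simp

lemma my_psd_det_pd {A : Matrix m m ℂ} (hA : A.PosSemidef) (hdet : A.det ≠ 0) : A.PosDef := by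
  have hev : ∀ i, 0 < hA.1.eigenvalues i := by
    intro i
    rcases lt_or_eq_of_le (hA.eigenvalues_nonneg i) with h | h
    · exact h
    · exfalso
      apply hdet
      rw [hA.1.det_eq_prod_eigenvalues]
      exact Finset.prod_eq_zero (Finset.mem_univ i) (by rw [← h]; norm_num)
  have hUdet : IsUnit ((hA.1.eigenvectorUnitary : Matrix m m ℂ)).det := by
    have hU : (hA.1.eigenvectorUnitary : Matrix m m ℂ) * star (hA.1.eigenvectorUnitary : Matrix m m ℂ) = 1 :=
      (Matrix.mem_unitaryGroup_iff).mp hA.1.eigenvectorUnitary.2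
    have := congrArg Matrix.det hU
    rw [Matrix.det_mul, Matrix.det_one] at this
    exact IsUnit.of_mul_eq_one _ this
  have hdiag : (diagonal (RCLike.ofReal ∘ hA.1.eigenvalues) : Matrix m m ℂ).PosDef := by
    rw [Matrix.posDef_diagonal_iff]
    intro i
    have := hev i
    simpa using (by exact_mod_cast this : (0:ℂ) < ((hA.1.eigenvalues i : ℝ) : ℂ))
  have := my_conj_pd hdiag hUdet
  rw [← Matrix.star_eq_conjTranspose] at this
  rwa [← (hA.1.spectral_theorem.trans (Unitary.conjStarAlgAut_apply _ _))] at this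

end helpers
theorem stmt9 {n : ℕ} (α X : Matrix (Fin n) (Fin n) ℂ)
    (hα : α.PosDef) (hατ : α.trace = 1)
    (hX : X.PosDef) (a b : ℝ) (ha : 0 < a) (hab : a ≤ b)
    (hXa : ∀ i, a ≤ hX.1.eigenvalues i) (hXb : ∀ i, hX.1.eigenvalues i ≤ b)
    (D : Matrix (Fin n) (Fin n) ℂ)
    (hD : D = ((X⁻¹ * α).trace)⁻¹ • ((hX.posSemidef.1.eigenvectorUnitary.1 * diagonal (((↑) : ℝ → ℂ) ∘ Real.sqrt ∘ hX.posSemidef.1.eigenvalues) * (star hX.posSemidef.1.eigenvectorUnitary : Matrix (Fin n) (Fin n) ℂ))⁻¹ * α * (hX.posSemidef.1.eigenvectorUnitary.1 * diagonal (((↑) : ℝ → ℂ) ∘ Real.sqrt ∘ hX.posSemidef.1.eigenvalues) * (star hX.posSemidef.1.eigenvectorUnitary : Matrix (Fin n) (Fin n) ℂ))⁻¹))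
    (hDh : D.IsHermitian) :
    D.PosDef ∧ D.trace = 1 ∧
    a * minEig hα.1 / (a * minEig hα.1 + (n - 1) * b * maxEig hα.1) ≤ minEig hDh ∧
    maxEig hDh ≤ b * maxEig hα.1 / (b * maxEig hα.1 + (n - 1) * a * minEig hα.1) := by
  have hb : (0:ℝ) < b := lt_of_lt_of_le ha hab
  have hn : n ≠ 0 := by
    rintro rfl
    rw [Matrix.trace] at hατ
    simp at hατ
  haveI : Nonempty (Fin n) := Fin.pos_iff_nonempty.mp (Nat.pos_of_ne_zero hn)
  have hn1 : (1:ℝ) ≤ (n:ℝ) := by exact_mod_cast Nat.one_le_iff_ne_zero.mpr hn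
  set k : ℝ := (n:ℝ) - 1 with hk
  have hk0 : 0 ≤ k := by simp only [hk]; linarith
  -- square root facts
  have hdg : (diagonal (((↑) : ℝ → ℂ) ∘ Real.sqrt ∘ hX.posSemidef.1.eigenvalues)).PosSemidef := by
    refine posSemidef_diagonal_iff.mpr fun i => ?_
    show (0:ℂ) ≤ ((Real.sqrt (hX.posSemidef.1.eigenvalues i) : ℝ) : ℂ)
    exact_mod_cast Real.sqrt_nonneg _
  have hXU' : star (hX.posSemidef.1.eigenvectorUnitary : Matrix (Fin n) (Fin n) ℂ) *
      (hX.posSemidef.1.eigenvectorUnitary : Matrix (Fin n) (Fin n) ℂ) = 1 :=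
    (Matrix.mem_unitaryGroup_iff').mp hX.posSemidef.1.eigenvectorUnitary.2
  set S := hX.posSemidef.1.eigenvectorUnitary.1 * diagonal (((↑) : ℝ → ℂ) ∘ Real.sqrt ∘ hX.posSemidef.1.eigenvalues) * (star hX.posSemidef.1.eigenvectorUnitary : Matrix (Fin n) (Fin n) ℂ) with hSdef
  have hSpsd : S.PosSemidef := by
    have := hdg.mul_mul_conjTranspose_same (hX.posSemidef.1.eigenvectorUnitary : Matrix (Fin n) (Fin n) ℂ)
    rw [← Matrix.star_eq_conjTranspose] at this
    exact this
  have hSS : S * S = X := by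
    rw [hSdef]
    conv_rhs => rw [hX.posSemidef.1.spectral_theorem, Unitary.conjStarAlgAut_apply]
    simp only [Matrix.mul_assoc]
    rw [← Matrix.mul_assoc (star _) (hX.posSemidef.1.eigenvectorUnitary : Matrix (Fin n) (Fin n) ℂ), hXU', Matrix.one_mul, ← Matrix.mul_assoc (diagonal _) (diagonal _), diagonal_mul_diagonal]
    congr 3
    funext i
    show ((Real.sqrt (hX.posSemidef.1.eigenvalues i) : ℝ) : ℂ) * ((Real.sqrt (hX.posSemidef.1.eigenvalues i) : ℝ) : ℂ) = ((hX.posSemidef.1.eigenvalues i : ℝ) : ℂ)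
    rw [← Complex.ofReal_mul, Real.mul_self_sqrt (hX.posSemidef.eigenvalues_nonneg i)]
  have hdetX : (0:ℂ) < X.det := hX.det_pos
  have hdetS : S.det ≠ 0 := by
    intro h
    have : X.det = 0 := by rw [← hSS, Matrix.det_mul, h, mul_zero]
    exact hdetX.ne' this
  have hS : S.PosDef := my_psd_det_pd hSpsd hdetS
  have hSi : S⁻¹.PosDef := hS.inv
  have hSih : (S⁻¹)ᴴ = S⁻¹ := hSi.1
  have hSu : IsUnit S.det := isUnit_iff_ne_zero.mpr hdetS
  set W : Matrix (Fin n) (Fin n) ℂ := S⁻¹ * S⁻¹ with hW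
  set M : Matrix (Fin n) (Fin n) ℂ := S⁻¹ * α * S⁻¹ with hM
  have hXinv : X⁻¹ = W := by rw [← hSS, Matrix.mul_inv_rev]
  have hSXS : S⁻¹ * X * S⁻¹ = 1 := by
    rw [← hSS, ← Matrix.mul_assoc S⁻¹ S S, Matrix.nonsing_inv_mul S hSu, Matrix.one_mul,
      Matrix.mul_nonsing_inv S hSu]
  have hMpd : M.PosDef := by
    have := my_conj_pd (B := S⁻¹) hα (isUnit_iff_ne_zero.mpr hSi.det_pos.ne')
    rwa [hSih] at this
  have conjPSD : ∀ P : Matrix (Fin n) (Fin n) ℂ, P.PosSemidef → (S⁻¹ * P * S⁻¹).PosSemidef := by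
    intro P hP
    have := hP.mul_mul_conjTranspose_same S⁻¹
    rwa [hSih] at this
  -- eigenvalue extremes of α
  set p : ℝ := minEig hα.1 with hpdef
  set q : ℝ := maxEig hα.1 with hqdef
  have hp_le : ∀ i, p ≤ hα.1.eigenvalues i := fun i =>
    ciInf_le (Finite.bddBelow_range _) i
  have hq_ge : ∀ i, hα.1.eigenvalues i ≤ q := fun i =>
    le_ciSup (Finite.bddAbove_range _) i
  obtain ⟨i0, hi0⟩ := Finite.exists_min hα.1.eigenvalues
  have hp_pos : 0 < p :=
    lt_of_lt_of_le (hα.eigenvalues_pos i0) (le_ciInf fun i => hi0 i)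
  have hq_pos : 0 < q := lt_of_lt_of_le hp_pos
    ((hp_le (Classical.arbitrary _)).trans (hq_ge _))
  have hpq : p ≤ q := (hp_le (Classical.arbitrary _)).trans (hq_ge _)
  -- matrix inequalities
  have hα_ge : (α - (p:ℂ) • 1).PosSemidef := (my_ge_iff hα.1 p).mpr hp_le
  have hα_le : ((q:ℂ) • 1 - α).PosSemidef := (my_le_iff hα.1 q).mpr hq_ge
  have hX_ge : (X - (a:ℂ) • 1).PosSemidef := (my_ge_iff hX.1 a).mpr hXa
  have hX_le : ((b:ℂ) • 1 - X).PosSemidef := (my_le_iff hX.1 b).mpr hXb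
  have m1 : S⁻¹ * (α - (p:ℂ) • 1) * S⁻¹ = M - (p:ℂ) • W := by
    rw [Matrix.mul_sub, Matrix.sub_mul, Matrix.mul_smul, Matrix.smul_mul, Matrix.mul_one]
  have m2 : S⁻¹ * ((b:ℂ) • 1 - X) * S⁻¹ = (b:ℂ) • W - 1 := by
    rw [Matrix.mul_sub, Matrix.sub_mul, Matrix.mul_smul, Matrix.smul_mul, Matrix.mul_one, hSXS]
  have m3 : S⁻¹ * ((q:ℂ) • 1 - α) * S⁻¹ = (q:ℂ) • W - M := by
    rw [Matrix.mul_sub, Matrix.sub_mul, Matrix.mul_smul, Matrix.smul_mul, Matrix.mul_one]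
  have m4 : S⁻¹ * (X - (a:ℂ) • 1) * S⁻¹ = 1 - (a:ℂ) • W := by
    rw [Matrix.mul_sub, Matrix.sub_mul, Matrix.mul_smul, Matrix.smul_mul, Matrix.mul_one, hSXS]
  have claim1 : (M - ((p/b : ℝ) : ℂ) • 1).PosSemidef := by
    have A1 := conjPSD _ hα_ge
    rw [m1] at A1
    have A2 := my_smul_psd (conjPSD _ hX_le) (le_of_lt (div_pos hp_pos hb))
    rw [m2] at A2
    have hsum := A1.add A2
    have e : M - (p:ℂ) • W + ((p/b : ℝ):ℂ) • ((b:ℂ) • W - 1) = M - ((p/b : ℝ):ℂ) • 1 := by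
      rw [smul_sub, smul_smul, show ((p/b : ℝ):ℂ) * (b:ℂ) = (p:ℂ) by
        rw [← Complex.ofReal_mul, div_mul_cancel₀ _ hb.ne']]
      abel
    rwa [e] at hsum
  have claim2 : (((q/a : ℝ) : ℂ) • 1 - M).PosSemidef := by
    have A1 := conjPSD _ hα_le
    rw [m3] at A1
    have A2 := my_smul_psd (conjPSD _ hX_ge) (le_of_lt (div_pos hq_pos ha))
    rw [m4] at A2
    have hsum := A1.add A2
    have e : (q:ℂ) • W - M + ((q/a : ℝ):ℂ) • (1 - (a:ℂ) • W) = ((q/a : ℝ):ℂ) • 1 - M := by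
      rw [smul_sub, smul_smul, show ((q/a : ℝ):ℂ) * (a:ℂ) = (q:ℂ) by
        rw [← Complex.ofReal_mul, div_mul_cancel₀ _ ha.ne']]
      abel
    rwa [e] at hsum
  have hMlo : ∀ i, p/b ≤ hMpd.1.eigenvalues i := (my_ge_iff hMpd.1 _).mp claim1
  have hMhi : ∀ i, hMpd.1.eigenvalues i ≤ q/a := (my_le_iff hMpd.1 _).mp claim2
  have ha' : a ≠ 0 := ha.ne'
  have hb' : b ≠ 0 := hb.ne'
  -- the trace
  set t : ℝ := ∑ i, hMpd.1.eigenvalues i with htdef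
  have htC : M.trace = (t : ℂ) := by
    rw [my_trace_eq hMpd.1, htdef]
    push_cast
    rfl
  have ht_pos : 0 < t := by
    rw [htdef]
    exact Finset.sum_pos (fun i _ => lt_of_lt_of_le (div_pos hp_pos hb) (hMlo i))
      Finset.univ_nonempty
  have ht' : t ≠ 0 := ht_pos.ne'
  have hc : (X⁻¹ * α).trace = (t : ℂ) := by
    rw [hXinv, show W * α = S⁻¹ * (S⁻¹ * α) from by rw [hW, Matrix.mul_assoc],
      Matrix.trace_mul_comm, ← hM, htC]
  rw [hc] at hD
  have hDpd : D.PosDef := by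
    rw [hD, ← Complex.ofReal_inv]
    exact my_smul_pd hMpd (inv_pos.mpr ht_pos)
  have hDtr : D.trace = 1 := by
    rw [hD, Matrix.trace_smul, htC, smul_eq_mul, inv_mul_cancel₀]
    exact Complex.ofReal_ne_zero.mpr ht'
  -- minimum bound
  obtain ⟨j0, hj0⟩ := Finite.exists_min hMpd.1.eigenvalues
  set r : ℝ := hMpd.1.eigenvalues j0 with hrdef
  have hbr : p ≤ r * b := (div_le_iff₀ hb).mp (hMlo j0)
  have htle : t ≤ r + k * (q/a) := by
    have hsplit : ∑ j ∈ Finset.univ.erase j0, hMpd.1.eigenvalues j + hMpd.1.eigenvalues j0 = t :=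
      Finset.sum_erase_add _ _ (Finset.mem_univ j0)
    have hbound : ∑ j ∈ Finset.univ.erase j0, hMpd.1.eigenvalues j
        ≤ (Finset.univ.erase j0).card • (q/a) :=
      Finset.sum_le_card_nsmul _ _ _ (fun j _ => hMhi j)
    have hcard : (((Finset.univ.erase j0).card : ℕ) : ℝ) = k := by
      rw [Finset.card_erase_of_mem (Finset.mem_univ j0), Finset.card_univ, Fintype.card_fin, hk]
      push_cast [Nat.cast_sub (Nat.one_le_iff_ne_zero.mpr hn)]
      ring
    rw [nsmul_eq_mul, hcard] at hbound
    linarith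
  set d : ℝ := a * p / (a * p + k * b * q) with hddef
  have hden1 : 0 < a * p + k * b * q :=
    add_pos_of_pos_of_nonneg (mul_pos ha hp_pos)
      (mul_nonneg (mul_nonneg hk0 hb.le) hq_pos.le)
  have hd0 : 0 ≤ d := div_nonneg (mul_nonneg ha.le hp_pos.le) hden1.le
  have hkey : ∀ i, d * t ≤ hMpd.1.eigenvalues i := by
    intro i
    have h1 : d * t ≤ d * (r + k * (q/a)) := mul_le_mul_of_nonneg_left htle hd0
    have h2 : d * (r + k * (q/a)) ≤ r := by
      rw [hddef, div_mul_eq_mul_div, div_le_iff₀ hden1]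
      have e : a * p * (r + k * (q / a)) = a * p * r + k * p * q := by
        field_simp
      rw [e]
      nlinarith [mul_nonneg (mul_nonneg hk0 hq_pos.le) (sub_nonneg.mpr hbr)]
    exact le_trans (h1.trans h2) (hj0 i)
  have Mdt : (M - ((d * t : ℝ) : ℂ) • 1).PosSemidef := (my_ge_iff hMpd.1 _).mpr hkey
  have eD : D - ((d : ℝ) : ℂ) • 1 = ((t⁻¹ : ℝ) : ℂ) • (M - ((d * t : ℝ) : ℂ) • 1) := by
    rw [hD, smul_sub, smul_smul]
    congr 1
    · rw [Complex.ofReal_inv]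
    · congr 1
      push_cast
      field_simp
  have Dd : (D - ((d : ℝ) : ℂ) • 1).PosSemidef := by
    rw [eD]
    exact my_smul_psd Mdt (inv_nonneg.mpr ht_pos.le)
  have hminD : d ≤ minEig hDh := le_ciInf ((my_ge_iff hDh d).mp Dd)
  -- maximum bound
  obtain ⟨j1, hj1⟩ := Finite.exists_max hMpd.1.eigenvalues
  set R : ℝ := hMpd.1.eigenvalues j1 with hRdef
  have haR : a * R ≤ q := by
    have h := hMhi j1
    rw [le_div_iff₀ ha] at h
    linarith
  have htge : R + k * (p/b) ≤ t := by
    have hsplit : ∑ j ∈ Finset.univ.erase j1, hMpd.1.eigenvalues j + hMpd.1.eigenvalues j1 = t :=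
      Finset.sum_erase_add _ _ (Finset.mem_univ j1)
    have hbound : (Finset.univ.erase j1).card • (p/b)
        ≤ ∑ j ∈ Finset.univ.erase j1, hMpd.1.eigenvalues j :=
      Finset.card_nsmul_le_sum _ _ _ (fun j _ => hMlo j)
    have hcard : (((Finset.univ.erase j1).card : ℕ) : ℝ) = k := by
      rw [Finset.card_erase_of_mem (Finset.mem_univ j1), Finset.card_univ, Fintype.card_fin, hk]
      push_cast [Nat.cast_sub (Nat.one_le_iff_ne_zero.mpr hn)]
      ring
    rw [nsmul_eq_mul, hcard] at hbound
    linarith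
  set e' : ℝ := b * q / (b * q + k * a * p) with hedef
  have hden2 : 0 < b * q + k * a * p :=
    add_pos_of_pos_of_nonneg (mul_pos hb hq_pos)
      (mul_nonneg (mul_nonneg hk0 ha.le) hp_pos.le)
  have he0 : 0 ≤ e' := div_nonneg (mul_nonneg hb.le hq_pos.le) hden2.le
  have hkey2 : ∀ i, hMpd.1.eigenvalues i ≤ e' * t := by
    intro i
    have h2 : R ≤ e' * (R + k * (p/b)) := by
      rw [hedef, div_mul_eq_mul_div, le_div_iff₀ hden2]
      have e : b * q * (R + k * (p / b)) = b * q * R + k * p * q := by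
        field_simp
      rw [e]
      nlinarith [mul_nonneg (mul_nonneg hk0 hp_pos.le) (sub_nonneg.mpr haR)]
    exact (hj1 i).trans (h2.trans (mul_le_mul_of_nonneg_left htge he0))
  have Met : (((e' * t : ℝ) : ℂ) • 1 - M).PosSemidef := (my_le_iff hMpd.1 _).mpr hkey2
  have eD2 : ((e' : ℝ) : ℂ) • 1 - D = ((t⁻¹ : ℝ) : ℂ) • (((e' * t : ℝ) : ℂ) • 1 - M) := by
    rw [hD, smul_sub, smul_smul]
    congr 1
    · congr 1
      push_cast
      field_simp
    · rw [Complex.ofReal_inv]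
  have De : (((e' : ℝ) : ℂ) • 1 - D).PosSemidef := by
    rw [eD2]
    exact my_smul_psd Met (inv_nonneg.mpr ht_pos.le)
  have hmaxD : maxEig hDh ≤ e' := ciSup_le ((my_le_iff hDh e').mp De)
  exact ⟨hDpd, hDtr, hminD, hmaxD⟩
end

section
/- Let Q(X) = ∑ᵢ Aᵢ X Aᵢ* be a completely positive map. Define a(Q) = min over density matrices X (positive semidefinite Hermitian of trace 1) of λ_n(Q(X)), and b(Q) = max over density matrices X of λ₁(Q(X)). Then a(Q) = a(Q') and b(Q) = b(Q') where Q'(X) = ∑ᵢ Aᵢ* X Aᵢ. In particular, Q maps all density matrices to positive definite matrices if and only if Q' does. -/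
open Matrix
open scoped ComplexOrder

namespace Stmt11Aux

variable {n k : ℕ}

noncomputable def outer (v : Fin n → ℂ) : Matrix (Fin n) (Fin n) ℂ := vecMulVec v (star v)

lemma outer_posSemidef (v : Fin n → ℂ) : (outer v).PosSemidef := by
  have h : outer v = replicateCol Unit v * (replicateCol Unit v)ᴴ := by
    rw [conjTranspose_replicateCol, ← vecMulVec_eq]; rfl
  rw [h]; exact posSemidef_self_mul_conjTranspose _

lemma outer_trace (v : Fin n → ℂ) : (outer v).trace = star v ⬝ᵥ v := by
  simp [outer, Matrix.trace, vecMulVec_apply, dotProduct, mul_comm]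

lemma trace_mul_outer (M : Matrix (Fin n) (Fin n) ℂ) (v : Fin n → ℂ) :
    (M * outer v).trace = star v ⬝ᵥ (M *ᵥ v) := by
  simp only [Matrix.trace, diag_apply, Matrix.mul_apply, outer, vecMulVec_apply, dotProduct,
    mulVec, Pi.star_apply]
  exact Finset.sum_congr rfl fun i _ => by
    rw [Finset.mul_sum]; exact Finset.sum_congr rfl fun j _ => by ring

lemma psd_trace_nonneg {P : Matrix (Fin n) (Fin n) ℂ} (hP : P.PosSemidef) : 0 ≤ P.trace := by
  apply Finset.sum_nonneg
  intro i _
  have := hP.dotProduct_mulVec_nonneg (Pi.single i 1)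
  simpa [dotProduct, mulVec, Pi.single_apply, ite_mul, mul_ite, apply_ite (star : ℂ → ℂ)] using this

open scoped MatrixOrder in
lemma trace_mul_psd_nonneg {X N : Matrix (Fin n) (Fin n) ℂ} (hX : X.PosSemidef)
    (hN : N.PosSemidef) : 0 ≤ (X * N).trace := by
  have hs := CFC.sqrt_mul_sqrt_self N hN.nonneg
  have hherm := (CFC.sqrt_nonneg N).posSemidef.isHermitian
  have h1 : (X * N).trace = (CFC.sqrt N * X * CFC.sqrt N).trace := by
    conv_lhs => rw [← hs]
    rw [← Matrix.mul_assoc, trace_mul_comm, ← Matrix.mul_assoc]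
  rw [h1]
  have h2 := hX.mul_mul_conjTranspose_same (CFC.sqrt N)
  rw [hherm.eq] at h2
  exact psd_trace_nonneg h2

end Stmt11Aux

namespace Stmt11Aux
variable {n : ℕ}

lemma conj_diag_posSemidef {M : Matrix (Fin n) (Fin n) ℂ} (hM : M.IsHermitian)
    (d : Fin n → ℝ) (hd : ∀ j, 0 ≤ d j) :
    ((hM.eigenvectorUnitary : Matrix (Fin n) (Fin n) ℂ) * diagonal (fun j => (d j : ℂ)) *
      star (hM.eigenvectorUnitary : Matrix (Fin n) (Fin n) ℂ)).PosSemidef := by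
  have hdiag : (diagonal (fun j => ((d j : ℝ) : ℂ))).PosSemidef :=
    posSemidef_diagonal_iff.mpr fun j => by exact_mod_cast hd j
  have := hdiag.mul_mul_conjTranspose_same (hM.eigenvectorUnitary : Matrix (Fin n) (Fin n) ℂ)
  rwa [← Matrix.star_eq_conjTranspose] at this

lemma conj_smul_one (hM : (M : Matrix (Fin n) (Fin n) ℂ).IsHermitian) (c : ℂ) :
    (hM.eigenvectorUnitary : Matrix (Fin n) (Fin n) ℂ) * (c • 1) *
      star (hM.eigenvectorUnitary : Matrix (Fin n) (Fin n) ℂ) = c • 1 := by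
  rw [Matrix.mul_smul, Matrix.mul_one, Matrix.smul_mul,
    (Unitary.mem_iff.mp hM.eigenvectorUnitary.prop).2]

lemma sub_smul_one_posSemidef {M : Matrix (Fin n) (Fin n) ℂ} (hM : M.IsHermitian)
    (c : ℝ) (hc : ∀ j, c ≤ hM.eigenvalues j) : (M - (c : ℂ) • 1).PosSemidef := by
  have key : M - (c : ℂ) • 1 =
      (hM.eigenvectorUnitary : Matrix (Fin n) (Fin n) ℂ) *
        diagonal (fun j => ((hM.eigenvalues j - c : ℝ) : ℂ)) *
        star (hM.eigenvectorUnitary : Matrix (Fin n) (Fin n) ℂ) := by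
    conv_lhs => rw [hM.spectral_theorem, Unitary.conjStarAlgAut_apply, ← conj_smul_one hM (c : ℂ)]
    rw [← Matrix.sub_mul, ← Matrix.mul_sub]
    congr 1
    rw [← Matrix.diagonal_one, ← Matrix.diagonal_smul, diagonal_sub]
    congr 2 with j
    simp [Function.comp]
  rw [key]
  exact conj_diag_posSemidef hM _ fun j => sub_nonneg.2 (hc j)

lemma smul_one_sub_posSemidef {M : Matrix (Fin n) (Fin n) ℂ} (hM : M.IsHermitian)
    (c : ℝ) (hc : ∀ j, hM.eigenvalues j ≤ c) : ((c : ℂ) • 1 - M).PosSemidef := by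
  have key : (c : ℂ) • 1 - M =
      (hM.eigenvectorUnitary : Matrix (Fin n) (Fin n) ℂ) *
        diagonal (fun j => ((c - hM.eigenvalues j : ℝ) : ℂ)) *
        star (hM.eigenvectorUnitary : Matrix (Fin n) (Fin n) ℂ) := by
    conv_lhs => rw [hM.spectral_theorem, Unitary.conjStarAlgAut_apply, ← conj_smul_one hM (c : ℂ)]
    rw [← Matrix.sub_mul, ← Matrix.mul_sub]
    congr 1
    rw [← Matrix.diagonal_one, ← Matrix.diagonal_smul, diagonal_sub]
    congr 2 with j
    simp [Function.comp]
  rw [key]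
  exact conj_diag_posSemidef hM _ fun j => sub_nonneg.2 (hc j)

end Stmt11Aux

namespace Stmt11Aux
variable {n k : ℕ}

lemma trace_re_bounds [Nonempty (Fin n)] {M X : Matrix (Fin n) (Fin n) ℂ}
    (hM : M.IsHermitian) (hX : X.PosSemidef) (htr : X.trace = 1) :
    (⨅ j, hM.eigenvalues j) ≤ ((X * M).trace).re ∧
      ((X * M).trace).re ≤ ⨆ j, hM.eigenvalues j := by
  constructor
  · have h1 := trace_mul_psd_nonneg hX
      (sub_smul_one_posSemidef hM _ (fun j => ciInf_le (Finite.bddBelow_range _) j))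
    rw [Matrix.mul_sub, Matrix.mul_smul, Matrix.mul_one, trace_sub, trace_smul, htr] at h1
    have h2 := (Complex.le_def.mp h1).1
    simp only [Complex.zero_re, Complex.sub_re, Complex.real_smul, Complex.ofReal_re,
      smul_eq_mul, mul_one] at h2
    linarith [h2]
  · have h1 := trace_mul_psd_nonneg hX
      (smul_one_sub_posSemidef hM _ (fun j => le_ciSup (Finite.bddAbove_range _) j))
    rw [Matrix.mul_sub, Matrix.mul_smul, Matrix.mul_one, trace_sub, trace_smul, htr] at h1
    have h2 := (Complex.le_def.mp h1).1
    simp only [Complex.zero_re, Complex.sub_re, Complex.real_smul, Complex.ofReal_re,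
      smul_eq_mul, mul_one] at h2
    linarith [h2]

lemma eigvec_dot_self {M : Matrix (Fin n) (Fin n) ℂ} (hM : M.IsHermitian) (j : Fin n) :
    star (⇑(hM.eigenvectorBasis j)) ⬝ᵥ ⇑(hM.eigenvectorBasis j) = 1 := by
  have h1 : ‖hM.eigenvectorBasis j‖ = 1 := hM.eigenvectorBasis.orthonormal.1 j
  have h2 := inner_self_eq_norm_sq_to_K (𝕜 := ℂ) (hM.eigenvectorBasis j)
  rw [EuclideanSpace.inner_eq_star_dotProduct] at h2
  rw [h1] at h2
  rw [dotProduct_comm]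
  simpa using h2

lemma trace_mul_outer_eig {M : Matrix (Fin n) (Fin n) ℂ} (hM : M.IsHermitian) (j : Fin n) :
    (M * outer (⇑(hM.eigenvectorBasis j))).trace = (hM.eigenvalues j : ℂ) := by
  rw [trace_mul_outer, hM.mulVec_eigenvectorBasis, dotProduct_smul, eigvec_dot_self]
  simp [Complex.real_smul]

end Stmt11Aux

namespace Stmt11Aux
variable {n k : ℕ}

lemma psdQ (A : Fin k → Matrix (Fin n) (Fin n) ℂ) {X : Matrix (Fin n) (Fin n) ℂ}
    (hX : X.PosSemidef) : (∑ i, A i * X * (A i)ᴴ).PosSemidef :=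
  Finset.sum_induction _ _ (fun _ _ ha hb => ha.add hb) PosSemidef.zero
    (fun i _ => hX.mul_mul_conjTranspose_same (A i))

lemma trace_swap (A : Fin k → Matrix (Fin n) (Fin n) ℂ) (X Y : Matrix (Fin n) (Fin n) ℂ) :
    ((∑ i, A i * X * (A i)ᴴ) * Y).trace = (X * ∑ i, (A i)ᴴ * Y * A i).trace := by
  rw [Finset.sum_mul, Matrix.mul_sum, trace_sum, trace_sum]
  refine Finset.sum_congr rfl fun i _ => ?_
  rw [Matrix.mul_assoc (A i * X), trace_mul_comm, ← Matrix.mul_assoc, trace_mul_comm, Matrix.mul_assoc]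

lemma eigenvalues_congr {M N : Matrix (Fin n) (Fin n) ℂ} (hMN : M = N)
    (hM : M.IsHermitian) (hN : N.IsHermitian) : hM.eigenvalues = hN.eigenvalues := by
  subst hMN; rfl

lemma nonempty_of_trace_one {X : Matrix (Fin n) (Fin n) ℂ} (htr : X.trace = 1) :
    Nonempty (Fin n) := by
  by_contra hc
  rw [not_nonempty_iff] at hc
  rw [Matrix.trace, Finset.univ_eq_empty, Finset.sum_empty] at htr
  exact one_ne_zero htr.symm

lemma dominate_inf (A B : Fin k → Matrix (Fin n) (Fin n) ℂ) (hAB : ∀ i, B i = (A i)ᴴ)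
    {X : Matrix (Fin n) (Fin n) ℂ} (hX : X.PosSemidef) (htr : X.trace = 1)
    (h : (∑ i, A i * X * (A i)ᴴ).IsHermitian) :
    ∃ Y : Matrix (Fin n) (Fin n) ℂ, Y.PosSemidef ∧ Y.trace = 1 ∧
      ∃ h' : (∑ i, B i * Y * (B i)ᴴ).IsHermitian,
        (⨅ j, h'.eigenvalues j) ≤ ⨅ j, h.eigenvalues j := by
  haveI := nonempty_of_trace_one htr
  obtain ⟨j₀, hj₀⟩ := exists_eq_ciInf_of_finite (f := h.eigenvalues)
  set v : Fin n → ℂ := ⇑(h.eigenvectorBasis j₀) with hv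
  have hYtr : (outer v).trace = 1 := by rw [outer_trace, eigvec_dot_self]
  refine ⟨outer v, outer_posSemidef v, hYtr, (psdQ B (outer_posSemidef v)).isHermitian, ?_⟩
  set N := ∑ i, B i * (outer v) * (B i)ᴴ with hNdef
  have hNalt : N = ∑ i, (A i)ᴴ * (outer v) * A i := by
    simp [hNdef, hAB, conjTranspose_conjTranspose]
  calc (⨅ j, (psdQ B (outer_posSemidef v)).isHermitian.eigenvalues j)
      ≤ ((X * N).trace).re :=
        (trace_re_bounds (psdQ B (outer_posSemidef v)).isHermitian hX htr).1
    _ = (((∑ i, A i * X * (A i)ᴴ) * outer v).trace).re := by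
        rw [hNalt, ← trace_swap A X (outer v)]
    _ = h.eigenvalues j₀ := by rw [trace_mul_outer_eig h j₀, Complex.ofReal_re]
    _ = ⨅ j, h.eigenvalues j := hj₀

lemma dominate_sup (A B : Fin k → Matrix (Fin n) (Fin n) ℂ) (hAB : ∀ i, B i = (A i)ᴴ)
    {X : Matrix (Fin n) (Fin n) ℂ} (hX : X.PosSemidef) (htr : X.trace = 1)
    (h : (∑ i, A i * X * (A i)ᴴ).IsHermitian) :
    ∃ Y : Matrix (Fin n) (Fin n) ℂ, Y.PosSemidef ∧ Y.trace = 1 ∧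
      ∃ h' : (∑ i, B i * Y * (B i)ᴴ).IsHermitian,
        (⨆ j, h.eigenvalues j) ≤ ⨆ j, h'.eigenvalues j := by
  haveI := nonempty_of_trace_one htr
  obtain ⟨j₀, hj₀⟩ := exists_eq_ciSup_of_finite (f := h.eigenvalues)
  set v : Fin n → ℂ := ⇑(h.eigenvectorBasis j₀) with hv
  have hYtr : (outer v).trace = 1 := by rw [outer_trace, eigvec_dot_self]
  refine ⟨outer v, outer_posSemidef v, hYtr, (psdQ B (outer_posSemidef v)).isHermitian, ?_⟩
  set N := ∑ i, B i * (outer v) * (B i)ᴴ with hNdef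
  have hNalt : N = ∑ i, (A i)ᴴ * (outer v) * A i := by
    simp [hNdef, hAB, conjTranspose_conjTranspose]
  calc (⨆ j, h.eigenvalues j) = h.eigenvalues j₀ := hj₀.symm
    _ = (((∑ i, A i * X * (A i)ᴴ) * outer v).trace).re := by
        rw [trace_mul_outer_eig h j₀, Complex.ofReal_re]
    _ = ((X * N).trace).re := by rw [hNalt, ← trace_swap A X (outer v)]
    _ ≤ ⨆ j, (psdQ B (outer_posSemidef v)).isHermitian.eigenvalues j :=
        (trace_re_bounds (psdQ B (outer_posSemidef v)).isHermitian hX htr).2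

end Stmt11Aux

namespace Stmt11Aux
variable {n k : ℕ}

lemma exists_normalized {x : Fin n → ℂ} (hx : x ≠ 0) :
    ∃ c : ℝ, 0 < c ∧ star ((c : ℂ) • x) ⬝ᵥ ((c : ℂ) • x) = 1 := by
  set S : ℝ := ∑ i, Complex.normSq (x i) with hS
  have hSpos : 0 < S := by
    obtain ⟨i, hi⟩ := Function.ne_iff.mp hx
    exact Finset.sum_pos' (fun j _ => Complex.normSq_nonneg _)
      ⟨i, Finset.mem_univ i, Complex.normSq_pos.mpr hi⟩
  have hdot : star x ⬝ᵥ x = (S : ℂ) := by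
    rw [hS]
    push_cast
    refine Finset.sum_congr rfl fun i _ => ?_
    simp [Complex.normSq_eq_conj_mul_self]
  refine ⟨(Real.sqrt S)⁻¹, inv_pos.mpr (Real.sqrt_pos.mpr hSpos), ?_⟩
  rw [star_smul, smul_dotProduct, dotProduct_smul, hdot]
  simp only [smul_eq_mul, Complex.star_def, Complex.conj_ofReal]
  rw [← Complex.ofReal_mul, ← Complex.ofReal_mul]
  norm_cast
  rw [← mul_assoc, ← mul_inv, Real.mul_self_sqrt hSpos.le, inv_mul_cancel₀ hSpos.ne']

end Stmt11Aux

namespace Stmt11Aux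
variable {n k : ℕ}

lemma posdef_dir (A B : Fin k → Matrix (Fin n) (Fin n) ℂ) (hAB : ∀ i, B i = (A i)ᴴ)
    (hQ : ∀ X : Matrix (Fin n) (Fin n) ℂ, X.PosSemidef → X.trace = 1 →
      (∑ i, A i * X * (A i)ᴴ).PosDef) :
    ∀ Y : Matrix (Fin n) (Fin n) ℂ, Y.PosSemidef → Y.trace = 1 →
      (∑ i, B i * Y * (B i)ᴴ).PosDef := by
  intro Y hY htr
  haveI := nonempty_of_trace_one htr
  set N := ∑ i, B i * Y * (B i)ᴴ with hNdef
  have hNalt : N = ∑ i, (A i)ᴴ * Y * A i := by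
    simp [hNdef, hAB, conjTranspose_conjTranspose]
  have hN : N.PosSemidef := psdQ B hY
  refine PosDef.of_dotProduct_mulVec_pos hN.isHermitian fun x hx => ?_
  have h0 : 0 ≤ star x ⬝ᵥ N *ᵥ x := hN.dotProduct_mulVec_nonneg x
  rcases h0.lt_or_eq with hlt | heq0
  · exact hlt
  · exfalso
    obtain ⟨c, hc, hw⟩ := exists_normalized hx
    set w : Fin n → ℂ := (c : ℂ) • x with hwdef
    have hXpsd : (outer w).PosSemidef := outer_posSemidef w
    have hXtr : (outer w).trace = 1 := by rw [outer_trace, hw]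
    have hPD := hQ (outer w) hXpsd hXtr
    set M := ∑ i, A i * (outer w) * (A i)ᴴ with hMdef
    obtain ⟨j₀, hj₀⟩ := exists_eq_ciInf_of_finite (f := hPD.1.eigenvalues)
    have hpos : 0 < ⨅ j, hPD.1.eigenvalues j := hj₀ ▸ hPD.eigenvalues_pos j₀
    have hb := (trace_re_bounds hPD.1 hY htr).1
    have hz : (Y * M).trace = 0 := by
      rw [trace_mul_comm, trace_swap A (outer w) Y, ← hNalt, trace_mul_comm,
        trace_mul_outer, hwdef, mulVec_smul, star_smul, smul_dotProduct, dotProduct_smul,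
        ← heq0]
      simp
    rw [hz] at hb
    simp at hb
    linarith

end Stmt11Aux

/-- `a(Q)` for the completely positive map `Q(X) = ∑ i, A i * X * (A i)ᴴ`:
the infimum over density matrices `X` of the smallest eigenvalue of `Q(X)`. -/
noncomputable def aQ {n k : ℕ} (A : Fin k → Matrix (Fin n) (Fin n) ℂ) : ℝ :=
  sInf {r : ℝ | ∃ X : Matrix (Fin n) (Fin n) ℂ, X.PosSemidef ∧ X.trace = 1 ∧
    ∃ h : (∑ i, A i * X * (A i)ᴴ).IsHermitian, r = ⨅ j, h.eigenvalues j}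

/-- `b(Q)`: the supremum over density matrices `X` of the largest eigenvalue of `Q(X)`. -/
noncomputable def bQ {n k : ℕ} (A : Fin k → Matrix (Fin n) (Fin n) ℂ) : ℝ :=
  sSup {r : ℝ | ∃ X : Matrix (Fin n) (Fin n) ℂ, X.PosSemidef ∧ X.trace = 1 ∧
    ∃ h : (∑ i, A i * X * (A i)ᴴ).IsHermitian, r = ⨆ j, h.eigenvalues j}

open Stmt11Aux in
theorem stmt11 {n k : ℕ} (A : Fin k → Matrix (Fin n) (Fin n) ℂ) :
    aQ A = aQ (fun i => (A i)ᴴ) ∧ bQ A = bQ (fun i => (A i)ᴴ) ∧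
    ((∀ X : Matrix (Fin n) (Fin n) ℂ, X.PosSemidef → X.trace = 1 →
        (∑ i, A i * X * (A i)ᴴ).PosDef) ↔
      (∀ X : Matrix (Fin n) (Fin n) ℂ, X.PosSemidef → X.trace = 1 →
        (∑ i, (A i)ᴴ * X * A i).PosDef)) := by
  have hAB : ∀ i, (fun i => (A i)ᴴ) i = (A i)ᴴ := fun i => rfl
  have hBA : ∀ i, A i = ((fun i => (A i)ᴴ) i)ᴴ := fun i => (conjTranspose_conjTranspose _).symm
  refine ⟨?_, ?_, ?_⟩
  · rw [aQ, aQ]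
    apply csInf_eq_csInf_of_forall_exists_le
    · rintro r ⟨X, hX, htr, h, rfl⟩
      obtain ⟨Y, hY, hYtr, h', hle⟩ := dominate_inf A (fun i => (A i)ᴴ) hAB hX htr h
      exact ⟨_, ⟨Y, hY, hYtr, h', rfl⟩, hle⟩
    · rintro r ⟨X, hX, htr, h, rfl⟩
      obtain ⟨Y, hY, hYtr, h', hle⟩ := dominate_inf (fun i => (A i)ᴴ) A hBA hX htr h
      exact ⟨_, ⟨Y, hY, hYtr, h', rfl⟩, hle⟩
  · rw [bQ, bQ]
    apply csSup_eq_csSup_of_forall_exists_le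
    · rintro r ⟨X, hX, htr, h, rfl⟩
      obtain ⟨Y, hY, hYtr, h', hle⟩ := dominate_sup A (fun i => (A i)ᴴ) hAB hX htr h
      exact ⟨_, ⟨Y, hY, hYtr, h', rfl⟩, hle⟩
    · rintro r ⟨X, hX, htr, h, rfl⟩
      obtain ⟨Y, hY, hYtr, h', hle⟩ := dominate_sup (fun i => (A i)ᴴ) A hBA hX htr h
      exact ⟨_, ⟨Y, hY, hYtr, h', rfl⟩, hle⟩
  · constructor
    · intro hQ X hX htr
      have h1 := posdef_dir A (fun i => (A i)ᴴ) hAB hQ X hX htr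
      rwa [show (∑ i, (fun i => (A i)ᴴ) i * X * ((fun i => (A i)ᴴ) i)ᴴ)
          = ∑ i, (A i)ᴴ * X * A i from by
        simp [conjTranspose_conjTranspose]] at h1
    · intro hQ X hX htr
      have hQ' : ∀ X : Matrix (Fin n) (Fin n) ℂ, X.PosSemidef → X.trace = 1 →
          (∑ i, (fun i => (A i)ᴴ) i * X * ((fun i => (A i)ᴴ) i)ᴴ).PosDef := by
        intro X hX htr
        have h1 := hQ X hX htr
        rwa [show (∑ i, (fun i => (A i)ᴴ) i * X * ((fun i => (A i)ᴴ) i)ᴴ)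
            = ∑ i, (A i)ᴴ * X * A i from by
          simp [conjTranspose_conjTranspose]]
      exact posdef_dir (fun i => (A i)ᴴ) A hBA hQ' X hX htr
end

section
/- Let Q be a completely positive map with a(Q) > 0, where a(Q)·I ⪯ Q(X) ⪯ b(Q)·I for all density matrices X. Then for any two density matrices X, Y: (a(Q)/b(Q))·Q(Y) ⪯ Q(X) ⪯ (b(Q)/a(Q))·Q(Y), and hence the Hilbert-metric diameter of the image Q(H_{n,+,1}) is at most 2·log(b(Q)/a(Q)). -/
open Matrix
open scoped ComplexOrder

/-- For positive definite `X`, `Y`, this is `λ₁(X Y⁻¹)`, the largest eigenvalue of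
`Y^{-1/2} X Y^{-1/2}`, characterized as the least `t` with `X ⪯ t Y`. -/
noncomputable def lamMax {n : ℕ} (X Y : Matrix (Fin n) (Fin n) ℂ) : ℝ :=
  sInf {t : ℝ | (t • Y - X).PosSemidef}

/-- For positive definite `X`, `Y`, this is `λ_n(X Y⁻¹)`, the smallest eigenvalue of
`Y^{-1/2} X Y^{-1/2}`, characterized as the greatest `t` with `t Y ⪯ X`. -/
noncomputable def lamMin {n : ℕ} (X Y : Matrix (Fin n) (Fin n) ℂ) : ℝ :=
  sSup {t : ℝ | (X - t • Y).PosSemidef}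

/-- The Hilbert projective metric on positive definite Hermitian matrices. -/
noncomputable def hilbertDist {n : ℕ} (X Y : Matrix (Fin n) (Fin n) ℂ) : ℝ :=
  Real.log (lamMax X Y) - Real.log (lamMin X Y)

lemma smul_psd {n : ℕ} {c : ℝ} (hc : 0 ≤ c) {M : Matrix (Fin n) (Fin n) ℂ}
    (hM : M.PosSemidef) : (c • M).PosSemidef := by
  have h : c • M = (c : ℂ) • M := by ext i j; simp [Complex.real_smul]
  rw [h]
  refine PosSemidef.of_dotProduct_mulVec_nonneg ?_ (fun x => ?_)
  · simp [Matrix.IsHermitian, conjTranspose_smul, hM.1.eq]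
  · rw [smul_mulVec, dotProduct_smul]
    exact smul_nonneg (by exact_mod_cast hc) (hM.dotProduct_mulVec_nonneg x)

lemma trace_nonneg' {n : ℕ} {M : Matrix (Fin n) (Fin n) ℂ} (hM : M.PosSemidef) :
    0 ≤ M.trace.re := by
  have h : ∀ i, 0 ≤ M i i := fun i => by
    have := hM.dotProduct_mulVec_nonneg (Pi.single i 1)
    simpa [dotProduct, Pi.single_apply, apply_ite] using this
  have : 0 ≤ M.trace := by
    rw [Matrix.trace]
    exact Finset.sum_nonneg fun i _ => h i
  exact (Complex.le_def.mp this).1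

theorem stmt17 {n k : ℕ} (A : Fin k → Matrix (Fin n) (Fin n) ℂ)
    (a b : ℝ) (ha : 0 < a) (hab : a ≤ b)
    (hbound : ∀ X : Matrix (Fin n) (Fin n) ℂ, X.PosSemidef → X.trace = 1 →
      ((∑ i, A i * X * (A i)ᴴ) - a • (1 : Matrix (Fin n) (Fin n) ℂ)).PosSemidef ∧
      (b • (1 : Matrix (Fin n) (Fin n) ℂ) - ∑ i, A i * X * (A i)ᴴ).PosSemidef)
    (X Y : Matrix (Fin n) (Fin n) ℂ)
    (hX : X.PosSemidef) (hX1 : X.trace = 1)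
    (hY : Y.PosSemidef) (hY1 : Y.trace = 1) :
    ((∑ i, A i * X * (A i)ᴴ) - (a / b) • ∑ i, A i * Y * (A i)ᴴ).PosSemidef ∧
    ((b / a) • (∑ i, A i * Y * (A i)ᴴ) - ∑ i, A i * X * (A i)ᴴ).PosSemidef ∧
    hilbertDist (∑ i, A i * X * (A i)ᴴ) (∑ i, A i * Y * (A i)ᴴ) ≤ 2 * Real.log (b / a) := by
  have hb : 0 < b := lt_of_lt_of_le ha hab
  set QX := ∑ i, A i * X * (A i)ᴴ with hQX
  set QY := ∑ i, A i * Y * (A i)ᴴ with hQY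
  obtain ⟨hX2, hX3⟩ := hbound X hX hX1
  obtain ⟨hY2, hY3⟩ := hbound Y hY hY1
  -- n ≥ 1
  have hn : 0 < n := by
    rcases Nat.eq_zero_or_pos n with h | h
    · exfalso
      subst h
      rw [Matrix.trace] at hX1
      simp at hX1
    · exact h
  have hN : (1 : ℝ) ≤ (n : ℝ) := by exact_mod_cast hn
  -- Part 1
  have part1 : (QX - (a / b) • QY).PosSemidef := by
    have key : QX - (a / b) • QY = (QX - a • 1) + (a / b) • (b • (1 : Matrix (Fin n) (Fin n) ℂ) - QY) := by
      rw [smul_sub, smul_smul, div_mul_cancel₀ a hb.ne']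
      abel
    rw [key]
    exact hX2.add (smul_psd (by positivity) hY3)
  -- Part 2
  have part2 : ((b / a) • QY - QX).PosSemidef := by
    have key : (b / a) • QY - QX = (b / a) • (QY - a • (1 : Matrix (Fin n) (Fin n) ℂ)) + (b • 1 - QX) := by
      rw [smul_sub, smul_smul, div_mul_cancel₀ b ha.ne']
      abel
    rw [key]
    exact (smul_psd (by positivity) hY2).add hX3
  refine ⟨part1, part2, ?_⟩
  -- trace bounds
  have htrace : ∀ (M : Matrix (Fin n) (Fin n) ℂ) (c : ℝ),
      (M - c • (1 : Matrix (Fin n) (Fin n) ℂ)).PosSemidef → (n : ℝ) * c ≤ M.trace.re := by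
    intro M c h
    have := trace_nonneg' h
    rw [trace_sub, trace_smul, trace_one] at this
    simp only [Complex.sub_re, Complex.smul_re, Complex.natCast_re, smul_eq_mul,
      Fintype.card_fin] at this
    linarith [this]
  have htrace' : ∀ (M : Matrix (Fin n) (Fin n) ℂ) (c : ℝ),
      (c • (1 : Matrix (Fin n) (Fin n) ℂ) - M).PosSemidef → M.trace.re ≤ (n : ℝ) * c := by
    intro M c h
    have := trace_nonneg' h
    rw [trace_sub, trace_smul, trace_one] at this
    simp only [Complex.sub_re, Complex.smul_re, Complex.natCast_re, smul_eq_mul,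
      Fintype.card_fin] at this
    linarith [this]
  have htr1 : (n : ℝ) * a ≤ QX.trace.re := htrace _ _ hX2
  have htr2 : QX.trace.re ≤ (n : ℝ) * b := htrace' _ _ hX3
  have htr3 : (n : ℝ) * a ≤ QY.trace.re := htrace _ _ hY2
  have htr4 : QY.trace.re ≤ (n : ℝ) * b := htrace' _ _ hY3
  have hy : 0 < QY.trace.re := lt_of_lt_of_le (by positivity) htr3
  -- lamMax bounds
  have hSlb : ∀ t ∈ {t : ℝ | (t • QY - QX).PosSemidef}, a / b ≤ t := by
    intro t ht
    have := trace_nonneg' ht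
    rw [trace_sub, trace_smul] at this
    simp only [Complex.sub_re, Complex.smul_re] at this
    simp only [smul_eq_mul] at this
    have htpos : 0 < t := by nlinarith
    rw [div_le_iff₀ hb]
    nlinarith [mul_le_mul_of_nonneg_left htr4 htpos.le]
  have hmemS : b / a ∈ {t : ℝ | (t • QY - QX).PosSemidef} := part2
  have hlamMax_le : lamMax QX QY ≤ b / a := csInf_le ⟨a / b, hSlb⟩ hmemS
  have hlamMax_ge : a / b ≤ lamMax QX QY :=
    le_csInf ⟨b / a, hmemS⟩ hSlb
  -- lamMin bounds
  have hTub : ∀ t ∈ {t : ℝ | (QX - t • QY).PosSemidef}, t ≤ b / a := by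
    intro t ht
    have := trace_nonneg' ht
    rw [trace_sub, trace_smul] at this
    simp only [Complex.sub_re, Complex.smul_re] at this
    simp only [smul_eq_mul] at this
    rcases le_or_gt t 0 with h0 | h0
    · have : 0 < b / a := by positivity
      linarith
    · rw [le_div_iff₀ ha]
      nlinarith [mul_le_mul_of_nonneg_left htr3 h0.le]
  have hmemT : a / b ∈ {t : ℝ | (QX - t • QY).PosSemidef} := part1
  have hlamMin_ge : a / b ≤ lamMin QX QY := le_csSup ⟨b / a, hTub⟩ hmemT
  -- conclude
  have hab_pos : 0 < a / b := by positivity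
  have h1 : Real.log (lamMax QX QY) ≤ Real.log (b / a) :=
    Real.log_le_log (lt_of_lt_of_le hab_pos hlamMax_ge) hlamMax_le
  have h2 : Real.log (a / b) ≤ Real.log (lamMin QX QY) :=
    Real.log_le_log hab_pos hlamMin_ge
  have h3 : Real.log (a / b) = - Real.log (b / a) := by
    rw [Real.log_div ha.ne' hb.ne', Real.log_div hb.ne' ha.ne']
    ring
  rw [hilbertDist]
  rw [h3] at h2
  linarith
end
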